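/- Let S be a set of odd primes (2 ∉ S), and define ψ(d) = φ(Q_d)·μ(ℓ_d) with Q_d the S-part and ℓ_d the S-free part of d. Then for every positive integer n, ∑_{d|n} ψ(d)·(-1)^{n/d} equals: -n if n ∈ P(S); n if n is even and n/2 ∈ P(S); and 0 otherwise. -/

import Mathlib

open ArithmeticFunction Finset
open scoped ArithmeticFunction.zeta

/-- The `S`-part of `d`: the largest divisor of `d` all of whose prime factors lie in `S`. -/
def Spart (S : Set ℕ) [DecidablePred (· ∈ S)] (d : ℕ) : ℕ :=
  ∏ p ∈ d.primeFactors.filter (· ∈ S), p ^ d.factorization p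

section Aux
variable (S : Set ℕ) [DecidablePred (· ∈ S)]

lemma Spart_dvd (d : ℕ) : Spart S d ∣ d := by
  rcases eq_or_ne d 0 with rfl | hd
  · exact dvd_zero _
  · conv_rhs => rw [← Nat.factorization_prod_pow_eq_self hd]
    rw [Finsupp.prod, Nat.support_factorization]
    exact Finset.prod_dvd_prod_of_subset _ _ _ (Finset.filter_subset _ _)

lemma Spart_pos (d : ℕ) : 0 < Spart S d := by
  apply Finset.prod_pos
  intro p hp
  simp only [Finset.mem_filter, Nat.mem_primeFactors] at hp
  exact pow_pos hp.1.1.pos _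

lemma Spart_one : Spart S 1 = 1 := by simp [Spart]

lemma Spart_mul {m n : ℕ} (hmn : Nat.Coprime m n) (hm : m ≠ 0) (hn : n ≠ 0) :
    Spart S (m * n) = Spart S m * Spart S n := by
  unfold Spart
  rw [Nat.primeFactors_mul hm hn, Finset.filter_union,
    Finset.prod_union]
  · congr 1
    · apply Finset.prod_congr rfl
      intro p hp
      simp only [Finset.mem_filter] at hp
      rw [Nat.factorization_mul hm hn]
      have : n.factorization p = 0 := by
        rw [← Finsupp.notMem_support_iff, Nat.support_factorization]
        exact Finset.disjoint_left.mp (Nat.Coprime.disjoint_primeFactors hmn) hp.1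
      simp [this]
    · apply Finset.prod_congr rfl
      intro p hp
      simp only [Finset.mem_filter] at hp
      rw [Nat.factorization_mul hm hn]
      have : m.factorization p = 0 := by
        rw [← Finsupp.notMem_support_iff, Nat.support_factorization]
        exact Finset.disjoint_right.mp (Nat.Coprime.disjoint_primeFactors hmn) hp.1
      simp [this]
  · exact Finset.disjoint_filter_filter (Nat.Coprime.disjoint_primeFactors hmn)


noncomputable def psiS : ArithmeticFunction ℤ :=
  ⟨fun d => (Nat.totient (Spart S d) : ℤ) * moebius (d / Spart S d),
   by simp [Spart]⟩

lemma psiS_apply (d : ℕ) :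
    psiS S d = (Nat.totient (Spart S d) : ℤ) * moebius (d / Spart S d) := rfl

lemma Spart_coprime {m n : ℕ} (hmn : Nat.Coprime m n) :
    Nat.Coprime (Spart S m) (Spart S n) :=
  Nat.Coprime.coprime_dvd_left (Spart_dvd S m)
    (Nat.Coprime.coprime_dvd_right (Spart_dvd S n) hmn)

lemma psiS_mult : IsMultiplicative (psiS S) := by
  constructor
  · simp [psiS_apply, Spart_one]
  · intro m n hmn
    rcases eq_or_ne m 0 with rfl | hm
    · have : n = 1 := Nat.coprime_zero_left n |>.mp hmn
      subst this; simp [psiS_apply, Spart_one]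
    rcases eq_or_ne n 0 with rfl | hn
    · have : m = 1 := Nat.coprime_zero_right m |>.mp hmn
      subst this; simp [psiS_apply, Spart_one]
    have hsm := Spart_dvd S m
    have hsn := Spart_dvd S n
    have hq : (m * n) / Spart S (m * n) = (m / Spart S m) * (n / Spart S n) := by
      rw [Spart_mul S hmn hm hn, Nat.div_mul_div_comm hsm hsn]
    have hcq : Nat.Coprime (m / Spart S m) (n / Spart S n) :=
      Nat.Coprime.coprime_dvd_left (Nat.div_dvd_of_dvd hsm)
        (Nat.Coprime.coprime_dvd_right (Nat.div_dvd_of_dvd hsn) hmn)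
    simp only [psiS_apply]
    rw [hq, Spart_mul S hmn hm hn, Nat.totient_mul (Spart_coprime S hmn),
      isMultiplicative_moebius.2 hcq]
    push_cast; ring

lemma Spart_prime_pow {p k : ℕ} (hp : p.Prime) (hk : k ≠ 0) :
    Spart S (p ^ k) = if p ∈ S then p ^ k else 1 := by
  unfold Spart
  rw [Nat.primeFactors_prime_pow hk hp, hp.factorization_pow]
  by_cases hps : p ∈ S
  · rw [Finset.filter_singleton, if_pos hps, if_pos hps]
    simp
  · rw [Finset.filter_singleton, if_neg hps, if_neg hps]
    simp

lemma psiS_prime_pow {p k : ℕ} (hp : p.Prime) (hk : k ≠ 0) :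
    psiS S (p ^ k) = if p ∈ S then ((p ^ k : ℕ).totient : ℤ) else moebius (p ^ k) := by
  rw [psiS_apply, Spart_prime_pow S hp hk]
  by_cases hps : p ∈ S
  · simp [hps, Nat.div_self (pow_pos hp.pos k)]
  · simp [hps]

-- ψ at any power of a prime in S is totient, including k = 0
lemma psiS_pow_mem {p : ℕ} (hp : p.Prime) (hps : p ∈ S) (k : ℕ) :
    psiS S (p ^ k) = ((p ^ k : ℕ).totient : ℤ) := by
  rcases eq_or_ne k 0 with rfl | hk
  · simp [(psiS_mult S).1]
  · rw [psiS_prime_pow S hp hk, if_pos hps]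

lemma psiS_pow_not_mem {p : ℕ} (hp : p.Prime) (hps : p ∉ S) (k : ℕ) :
    psiS S (p ^ k) = moebius (p ^ k) := by
  rcases eq_or_ne k 0 with rfl | hk
  · simp [(psiS_mult S).1]
  · rw [psiS_prime_pow S hp hk, if_neg hps]

lemma T_prime_pow {p k : ℕ} (hp : p.Prime) (hk : k ≠ 0) :
    (psiS S * ζ) (p ^ k) = if p ∈ S then ((p : ℤ) ^ k) else 0 := by
  rw [coe_mul_zeta_apply]
  by_cases hps : p ∈ S
  · rw [if_pos hps]
    have : ∀ d ∈ (p ^ k).divisors, psiS S d = ((d.totient : ℤ)) := by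
      intro d hd
      obtain ⟨j, -, rfl⟩ := (Nat.dvd_prime_pow hp).mp (Nat.mem_divisors.mp hd).1
      exact psiS_pow_mem S hp hps j
    rw [Finset.sum_congr rfl this, ← Nat.cast_sum, Nat.sum_totient]
    push_cast; ring
  · rw [if_neg hps]
    have : ∀ d ∈ (p ^ k).divisors, psiS S d = moebius d := by
      intro d hd
      obtain ⟨j, -, rfl⟩ := (Nat.dvd_prime_pow hp).mp (Nat.mem_divisors.mp hd).1
      exact psiS_pow_not_mem S hp hps j
    rw [Finset.sum_congr rfl this, ← coe_mul_zeta_apply, moebius_mul_coe_zeta,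
      one_apply]
    exact if_neg (Nat.one_lt_pow hk hp.one_lt).ne'


lemma T_apply {n : ℕ} (hn : n ≠ 0) :
    (psiS S * (ζ : ArithmeticFunction ℤ)) n = if ∀ p ∈ n.primeFactors, p ∈ S then (n : ℤ) else 0 := by
  have hT : IsMultiplicative (psiS S * (ζ : ArithmeticFunction ℤ)) :=
    (psiS_mult S).mul isMultiplicative_zeta.natCast
  rw [hT.multiplicative_factorization _ hn]
  rw [Finsupp.prod, Nat.support_factorization]
  by_cases hall : ∀ p ∈ n.primeFactors, p ∈ S
  · rw [if_pos hall]
    have : ∀ p ∈ n.primeFactors, (psiS S * (ζ : ArithmeticFunction ℤ)) (p ^ n.factorization p) =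
        ((p : ℤ) ^ n.factorization p) := by
      intro p hp
      rw [T_prime_pow S (Nat.prime_of_mem_primeFactors hp)
        (Nat.Prime.factorization_pos_of_dvd (Nat.prime_of_mem_primeFactors hp) hn (Nat.dvd_of_mem_primeFactors hp)).ne', if_pos (hall p hp)]
    rw [Finset.prod_congr rfl this]
    conv_rhs => rw [← Nat.factorization_prod_pow_eq_self hn]
    rw [Finsupp.prod, Nat.support_factorization]
    push_cast
    rfl
  · rw [if_neg hall]
    push_neg at hall
    obtain ⟨p, hp, hps⟩ := hall
    apply Finset.prod_eq_zero hp
    rw [T_prime_pow S (Nat.prime_of_mem_primeFactors hp)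
      (Nat.Prime.factorization_pos_of_dvd (Nat.prime_of_mem_primeFactors hp) hn (Nat.dvd_of_mem_primeFactors hp)).ne', if_neg hps]

end Aux

open scoped Classical in
theorem sum_psi_neg_one_pow_two_not_mem (S : Set ℕ) [DecidablePred (· ∈ S)]
    (hS : ∀ q ∈ S, Nat.Prime q) (h2 : 2 ∉ S) (n : ℕ) (hn : 0 < n) :
    ∑ d ∈ n.divisors,
        (Nat.totient (Spart S d) : ℤ) * moebius (d / Spart S d) * (-1) ^ (n / d)
      = if ∀ p ∈ n.primeFactors, p ∈ S then -(n : ℤ)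
        else if Even n ∧ ∀ p ∈ (n / 2).primeFactors, p ∈ S then (n : ℤ)
        else 0 := by
  have hn0 : n ≠ 0 := hn.ne'
  set a := n.factorization 2 with ha
  set m := ordCompl[2] n with hm
  have hm0 : m ≠ 0 := (Nat.ordCompl_pos 2 hn0).ne'
  have hnm : n = 2 ^ a * m := (Nat.ordProj_mul_ordCompl_eq_self n 2).symm
  have h2m : ¬ 2 ∣ m := Nat.not_dvd_ordCompl Nat.prime_two hn0
  -- step 1: rewrite summand via psiS
  have hstep1 : ∀ d, (Nat.totient (Spart S d) : ℤ) * moebius (d / Spart S d) * (-1) ^ (n / d)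
      = psiS S d * (-1) ^ (n / d) := fun d => by rw [psiS_apply]
  simp only [hstep1]
  -- step 2: split (-1)^k
  have hsplit : ∀ d, (psiS S d : ℤ) * (-1) ^ (n / d)
      = psiS S d - (if Odd (n / d) then 2 * psiS S d else 0) := by
    intro d
    rcases Nat.even_or_odd (n / d) with he | ho
    · rw [he.neg_one_pow, if_neg (by simpa [Nat.not_odd_iff_even] using he)]
      ring
    · rw [ho.neg_one_pow, if_pos ho]
      ring
  rw [Finset.sum_congr rfl (fun d _ => hsplit d), Finset.sum_sub_distrib,
    ← Finset.sum_filter]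
  have hT : ∑ d ∈ n.divisors, psiS S d = (psiS S * (ζ : ArithmeticFunction ℤ)) n := by
    rw [coe_mul_zeta_apply]
  -- step 3: the filtered set is the image of m.divisors
  have himage : n.divisors.filter (fun d => Odd (n / d))
      = m.divisors.image (fun e => 2 ^ a * e) := by
    ext d
    simp only [Finset.mem_filter, Nat.mem_divisors, Finset.mem_image]
    constructor
    · rintro ⟨⟨hdn, -⟩, hodd⟩
      have hd0 : d ≠ 0 := fun h => hn0 (Nat.eq_zero_of_zero_dvd (h ▸ hdn))
      have hnd0 : n / d ≠ 0 := fun h => by simp [h] at hodd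
      have hcd : (n / d).factorization 2 = 0 :=
        Nat.factorization_eq_zero_of_not_dvd (Nat.two_dvd_ne_zero.mpr (Nat.odd_iff.mp hodd))
      have hfa : a = d.factorization 2 := by
        have : n = d * (n / d) := (Nat.mul_div_cancel' hdn).symm
        rw [ha, this, Nat.factorization_mul hd0 hnd0]
        simp [hcd]
      have h2ad : 2 ^ a ∣ d := hfa ▸ Nat.ordProj_dvd d 2
      refine ⟨d / 2 ^ a, ⟨?_, hm0⟩, Nat.mul_div_cancel' h2ad⟩
      obtain ⟨e, rfl⟩ := h2ad
      rw [Nat.mul_div_cancel_left e (pow_pos two_pos a)]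
      have := hnm ▸ hdn
      exact (Nat.mul_dvd_mul_iff_left (pow_pos two_pos a)).mp this
    · rintro ⟨e, ⟨hem, -⟩, rfl⟩
      have hdvd : 2 ^ a * e ∣ n := hnm ▸ mul_dvd_mul_left _ hem
      refine ⟨⟨hdvd, hn0⟩, ?_⟩
      have : n / (2 ^ a * e) = m / e := by
        rw [hnm, Nat.mul_div_mul_left _ _ (pow_pos two_pos a)]
      rw [this]
      have h1 : m / e ∣ m := Nat.div_dvd_of_dvd hem
      have h2' : ¬ 2 ∣ (m / e) := fun h => h2m (h.trans h1)
      exact Nat.odd_iff.mpr (Nat.two_dvd_ne_zero.mp h2')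
  rw [himage, Finset.sum_image (fun x hx y hy h =>
    Nat.eq_of_mul_eq_mul_left (pow_pos two_pos a) h)]
  have hcop : ∀ e ∈ m.divisors, Nat.Coprime (2 ^ a) e := by
    intro e he
    have hem := (Nat.mem_divisors.mp he).1
    exact Nat.Coprime.pow_left a
      ((Nat.Prime.coprime_iff_not_dvd Nat.prime_two).mpr (fun h => h2m (h.trans hem)))
  have hpsimul : ∀ e ∈ m.divisors, (2 : ℤ) * psiS S (2 ^ a * e)
      = 2 * (moebius (2 ^ a) * psiS S e) := by
    intro e he
    rw [(psiS_mult S).2 (hcop e he), psiS_pow_not_mem S Nat.prime_two h2 a]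
  rw [Finset.sum_congr rfl hpsimul, hT, ← Finset.mul_sum, ← Finset.mul_sum,
    show ∑ e ∈ m.divisors, psiS S e = (psiS S * (ζ : ArithmeticFunction ℤ)) m from
      (coe_mul_zeta_apply).symm]
  rw [T_apply S hn0, T_apply S hm0]
  -- now case analysis on a
  rcases Nat.lt_or_ge a 1 with ha0 | ha1
  · -- a = 0 : n odd
    interval_cases a
    · have hmn' : n = m := by simpa using hnm
      have hnodd : ¬ Even n := fun h => h2m (hmn' ▸ (even_iff_two_dvd.mp h))
      simp only [pow_zero, moebius_apply_one, ← hmn']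
      by_cases hc : ∀ p ∈ n.primeFactors, p ∈ S
      · simp only [if_pos hc]; ring
      · have : ¬ (Even n ∧ ∀ p ∈ (n / 2).primeFactors, p ∈ S) := fun hc' => hnodd hc'.1
        rw [if_neg hc, if_neg hc, if_neg this]
        ring
  · rcases Nat.lt_or_ge a 2 with ha1' | ha2
    · -- a = 1
      interval_cases a
      · have hnm' : n = 2 * m := by simpa using hnm
        have hmemn : 2 ∈ n.primeFactors :=
          Nat.mem_primeFactors.mpr ⟨Nat.prime_two, by omega, hn0⟩
        have hcn : ¬ ∀ p ∈ n.primeFactors, p ∈ S := fun h => h2 (h 2 hmemn)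
        have hev : Even n := ⟨m, by omega⟩
        have hnd2 : n / 2 = m := by omega
        rw [if_neg hcn, if_neg hcn, hnd2]
        simp only [pow_one, moebius_apply_prime Nat.prime_two]
        by_cases hcm : ∀ p ∈ m.primeFactors, p ∈ S
        · rw [if_pos hcm, if_pos ⟨hev, hcm⟩]
          have : (n : ℤ) = 2 * m := by exact_mod_cast hnm'
          rw [this]; ring
        · have : ¬ (Even n ∧ ∀ p ∈ m.primeFactors, p ∈ S) := fun hc => hcm hc.2
          rw [if_neg hcm, if_neg this]
          ring
    · -- a ≥ 2
      have hμ : moebius (2 ^ a) = 0 := by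
        rw [moebius_apply_prime_pow Nat.prime_two (by omega)]
        simp [show a ≠ 1 by omega]
      have h4 : (4 : ℕ) ∣ n := by
        have h22 : (2:ℕ) ^ 2 ∣ 2 ^ a := pow_dvd_pow 2 ha2
        rw [hnm]
        exact dvd_mul_of_dvd_left (by simpa using h22) m
      have hmemn : 2 ∈ n.primeFactors :=
        Nat.mem_primeFactors.mpr ⟨Nat.prime_two, by omega, hn0⟩
      have hcn : ¬ ∀ p ∈ n.primeFactors, p ∈ S := fun h => h2 (h 2 hmemn)
      have hmem2 : 2 ∈ (n / 2).primeFactors :=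
        Nat.mem_primeFactors.mpr ⟨Nat.prime_two, by omega, by omega⟩
      have hc2 : ¬ (Even n ∧ ∀ p ∈ (n / 2).primeFactors, p ∈ S) :=
        fun hc => h2 (hc.2 2 hmem2)
      rw [if_neg hcn, if_neg hcn, hμ, if_neg hc2]
      ring
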